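/- For all real parameters η > 0 and φ > 0, the mean of the PCD is ∑_{x=0}^∞ x·p(x) = (η+4φ)/(η(φ+η)). -/

import Mathlib

lemma choose4_cast (n : ℕ) : ((n+4).choose 4 : ℝ) = ((n:ℝ)+1)*((n:ℝ)+2)*((n:ℝ)+3)*((n:ℝ)+4)/24 := by
  have h := Nat.descFactorial_eq_factorial_mul_choose (n+4) 4
  have h2 : (n+4).descFactorial 4 = (n+4)*(n+3)*(n+2)*(n+1) := by
    simp [Nat.descFactorial]; ring
  rw [h2] at h
  have := congrArg (Nat.cast (R := ℝ)) h
  push_cast at this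
  rw [show (Nat.factorial 4 : ℝ) = 24 by norm_num [Nat.factorial]] at this
  linarith

lemma choose3_cast (n : ℕ) : ((n+3).choose 3 : ℝ) = ((n:ℝ)+1)*((n:ℝ)+2)*((n:ℝ)+3)/6 := by
  have h := Nat.descFactorial_eq_factorial_mul_choose (n+3) 3
  have h2 : (n+3).descFactorial 3 = (n+3)*(n+2)*(n+1) := by
    simp [Nat.descFactorial]; ring
  rw [h2] at h
  have := congrArg (Nat.cast (R := ℝ)) h
  push_cast at this
  rw [show (Nat.factorial 3 : ℝ) = 6 by norm_num [Nat.factorial]] at this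
  linarith

/-- The mean of the PCD. -/
theorem pcd_mean (η φ : ℝ) (hη : 0 < η) (hφ : 0 < φ) :
    ∑' x : ℕ, (x : ℝ) *
        ((η ^ 2 / ((φ + η) * (1 + η) ^ (x + 4)))
          * ((1 + η) ^ 3
            + (φ * η ^ 2 / 6) * ((x : ℝ) + 1) * ((x : ℝ) + 2) * ((x : ℝ) + 3)))
      = (η + 4 * φ) / (η * (φ + η)) := by
  have h1η : (0:ℝ) < 1 + η := by linarith
  have hφη : (0:ℝ) < φ + η := by linarith
  set r : ℝ := (1+η)⁻¹ with hrdef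
  have hr0 : 0 < r := by positivity
  have hr1 : r < 1 := by
    rw [hrdef, inv_lt_one_iff₀]; right; linarith
  have hrn : ‖r‖ < 1 := by rw [Real.norm_eq_abs, abs_of_pos hr0]; exact hr1
  have h0 := hasSum_choose_mul_geometric_of_norm_lt_one (𝕜 := ℝ) 0 hrn
  have h1 := hasSum_choose_mul_geometric_of_norm_lt_one (𝕜 := ℝ) 1 hrn
  have h3 := hasSum_choose_mul_geometric_of_norm_lt_one (𝕜 := ℝ) 3 hrn
  have h4 := hasSum_choose_mul_geometric_of_norm_lt_one (𝕜 := ℝ) 4 hrn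
  set a : ℝ := η^2 * (1+η)^3 * r^4 / (φ+η) with ha
  set b : ℝ := 4 * φ * η^4 * r^4 / (φ+η) with hb
  have H := ((h1.sub h0).mul_left a).add ((h4.sub h3).mul_left b)
  have key : ∀ n : ℕ,
      (n : ℝ) *
        ((η ^ 2 / ((φ + η) * (1 + η) ^ (n + 4)))
          * ((1 + η) ^ 3
            + (φ * η ^ 2 / 6) * ((n : ℝ) + 1) * ((n : ℝ) + 2) * ((n : ℝ) + 3)))
      = a * (((n+1).choose 1 : ℝ) * r^n - ((n+0).choose 0 : ℝ) * r^n)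
        + b * (((n+4).choose 4 : ℝ) * r^n - ((n+3).choose 3 : ℝ) * r^n) := by
    intro n
    rw [choose4_cast, choose3_cast]
    have hc1 : ((n+1).choose 1 : ℝ) = (n:ℝ) + 1 := by
      rw [Nat.choose_one_right]; push_cast; ring
    rw [hc1]
    simp only [Nat.add_zero, Nat.choose_self, Nat.choose_zero_right, Nat.cast_one]
    have hpow : (1 + η) ^ (n + 4) = (1+η)^n * (1+η)^4 := by rw [pow_add]
    have hrn' : r ^ n = ((1+η)^n)⁻¹ := by rw [hrdef, inv_pow]
    have hne : ((1+η)^n) ≠ 0 := by positivity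
    rw [ha, hb, hpow, hrn', hrdef]
    field_simp
    ring
  rw [tsum_congr key, H.tsum_eq]
  have h1r : 1 - r = η / (1+η) := by
    rw [hrdef]; field_simp; ring
  rw [ha, hb, h1r, hrdef]
  have hη' : η ≠ 0 := ne_of_gt hη
  have h1η' : (1 + η) ≠ 0 := ne_of_gt h1η
  simp only [one_div, div_pow, inv_pow, inv_div]
  field_simp
  ring
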